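/- Let V be a finite-dimensional real vector space and C ⊆ V a closed cone that decomposes as a direct sum C = ⊕ᵢ Cᵢ of cones Cᵢ spanning linearly independent subspaces Vᵢ. Suppose T : V → V is a linear map, positive with respect to C, such that for every extreme ray generator ω of C there is a scalar c_ω ≥ 0 with T(ω) = c_ω ω. If each Cᵢ is irreducible, then T = ∑ᵢ cᵢ Pᵢ where Pᵢ is the projection onto Vᵢ along ⊕_{j≠i} Vⱼ and the cᵢ ≥ 0 are constants. -/

import Mathlib

/-- A (convex) cone in a real vector space, as a set. -/
def IsConeSet {V : Type*} [AddCommGroup V] [Module ℝ V] (C : Set V) : Prop :=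
  (0 : V) ∈ C ∧ (∀ x ∈ C, ∀ t : ℝ, 0 ≤ t → t • x ∈ C) ∧ ∀ x ∈ C, ∀ y ∈ C, x + y ∈ C

/-- `ω` generates an extreme ray of the cone `C`. -/
def IsExtremeRayGen {V : Type*} [AddCommGroup V] [Module ℝ V] (C : Set V) (ω : V) : Prop :=
  ω ∈ C ∧ ω ≠ 0 ∧ ∀ x ∈ C, ∀ y ∈ C, x + y = ω → ∃ t : ℝ, 0 ≤ t ∧ x = t • ω

/-- An irreducible cone: not a nontrivial direct sum of two cones spanning
independent subspaces. -/
def IsIrreducibleCone {V : Type*} [AddCommGroup V] [Module ℝ V] (C : Set V) : Prop :=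
  IsConeSet C ∧ ¬∃ D E : Set V, IsConeSet D ∧ IsConeSet E ∧ D ≠ {0} ∧ E ≠ {0} ∧
    (Submodule.span ℝ D ⊓ Submodule.span ℝ E = ⊥) ∧
    C = {x | ∃ d ∈ D, ∃ e ∈ E, x = d + e}

section Aux
variable {V : Type*} [NormedAddCommGroup V] [NormedSpace ℝ V]

/-- The cone hull of a set, as an `AddSubmonoid`. -/
def coneHull (S : Set V) : AddSubmonoid V :=
  AddSubmonoid.closure {y | ∃ t : ℝ, 0 ≤ t ∧ ∃ ω ∈ S, y = t • ω}

lemma smul_mem_coneHull {S : Set V} {x : V} (hx : x ∈ coneHull S) {t : ℝ} (ht : 0 ≤ t) :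
    t • x ∈ coneHull S := by
  induction hx using AddSubmonoid.closure_induction with
  | mem y hy =>
    obtain ⟨s, hs, ω, hω, rfl⟩ := hy
    exact AddSubmonoid.subset_closure ⟨t * s, mul_nonneg ht hs, ω, hω, (smul_smul t s ω)⟩
  | zero => simpa using (coneHull S).zero_mem
  | add a b _ _ ha hb => simpa [smul_add] using (coneHull S).add_mem ha hb

lemma isConeSet_coneHull (S : Set V) : IsConeSet (coneHull S : Set V) :=
  ⟨(coneHull S).zero_mem, fun _ hx t ht => smul_mem_coneHull hx ht,
    fun _ hx _ hy => (coneHull S).add_mem hx hy⟩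

lemma coneHull_subset {S C : Set V} (hC : IsConeSet C) (hS : S ⊆ C) :
    (coneHull S : Set V) ⊆ C := by
  intro x hx
  induction hx using AddSubmonoid.closure_induction with
  | mem y hy => obtain ⟨s, hs, ω, hω, rfl⟩ := hy; exact hC.2.1 ω (hS hω) s hs
  | zero => exact hC.1
  | add a b _ _ ha hb => exact hC.2.2 a ha b hb

lemma coneHull_subset_submodule {S : Set V} {U : Submodule ℝ V} (h : S ⊆ ↑U) :
    (coneHull S : Set V) ⊆ ↑U :=
  coneHull_subset ⟨U.zero_mem, fun x hx t _ => U.smul_mem t hx, fun _ hx _ hy => U.add_mem hx hy⟩ h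

lemma IsConeSet.convex {C : Set V} (h : IsConeSet C) : Convex ℝ C :=
  fun x hx y hy a b ha hb _ => h.2.2 _ (h.2.1 x hx a ha) _ (h.2.1 y hy b hb)

lemma IsConeSet.closure {C : Set V} (h : IsConeSet C) : IsConeSet (closure C) := by
  refine ⟨subset_closure h.1, ?_, ?_⟩
  · intro x hx t ht
    obtain ⟨u, hu, hlim⟩ := mem_closure_iff_seq_limit.1 hx
    exact mem_closure_iff_seq_limit.2 ⟨fun k => t • u k, fun k => h.2.1 _ (hu k) t ht,
      hlim.const_smul t⟩
  · intro x hx y hy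
    obtain ⟨u, hu, hul⟩ := mem_closure_iff_seq_limit.1 hx
    obtain ⟨v, hv, hvl⟩ := mem_closure_iff_seq_limit.1 hy
    exact mem_closure_iff_seq_limit.2 ⟨fun k => u k + v k, fun k => h.2.2 _ (hu k) _ (hv k),
      hul.add hvl⟩

lemma sum_mem_coneSet {C : Set V} (hC : IsConeSet C) {ι : Type*} (t : Finset ι) (z : ι → V)
    (hz : ∀ j ∈ t, z j ∈ C) : ∑ j ∈ t, z j ∈ C := by
  classical
  induction t using Finset.induction with
  | empty => simpa using hC.1
  | insert _ _ hnot ih =>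
    rename_i a s
    rw [Finset.sum_insert hnot]
    exact hC.2.2 _ (hz a (Finset.mem_insert_self a s)) _
      (ih fun j hj => hz j (Finset.mem_insert_of_mem hj))

end Aux

section Aux2
variable {V : Type*} [NormedAddCommGroup V] [NormedSpace ℝ V] [FiniteDimensional ℝ V]
open Module

lemma isCompact_convexHull_of_isCompact {S : Set V} (hS : IsCompact S) (hne : S.Nonempty) :
    IsCompact (convexHull ℝ S) := by
  classical
  obtain ⟨s₀, hs₀⟩ := hne
  set d := finrank ℝ V + 1 with hd
  let Φ : (Fin d → ℝ) × (Fin d → V) → V := fun p => ∑ i, p.1 i • p.2 i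
  have hΦ : Continuous Φ := by
    apply continuous_finset_sum
    intro i _
    exact ((continuous_apply i).comp continuous_fst).smul
      ((continuous_apply i).comp continuous_snd)
  have himg : convexHull ℝ S = Φ '' ((stdSimplex ℝ (Fin d)) ×ˢ (Set.univ.pi fun _ => S)) := by
    apply Set.Subset.antisymm
    · intro x hx
      obtain ⟨ι, hfin, z, w, hrange, hai, hpos, hsum, hx⟩ :=
        eq_pos_convex_span_of_mem_convexHull hx
      have hcard : Fintype.card ι ≤ d :=
        hai.card_le_finrank_succ.trans (Nat.succ_le_succ (Submodule.finrank_le _))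
      obtain ⟨g⟩ := Function.Embedding.nonempty_of_card_le (α := ι) (β := Fin d)
        (by simpa using hcard)
      let w' : Fin d → ℝ := fun j => if h : ∃ i, g i = j then w h.choose else 0
      let z' : Fin d → V := fun j => if h : ∃ i, g i = j then z h.choose else s₀
      have hw' : ∀ i, w' (g i) = w i := by
        intro i
        have h : ∃ i', g i' = g i := ⟨i, rfl⟩
        simp only [w', dif_pos h, g.injective h.choose_spec]
      have hz' : ∀ i, z' (g i) = z i := by
        intro i
        have h : ∃ i', g i' = g i := ⟨i, rfl⟩
        simp only [z', dif_pos h, g.injective h.choose_spec]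
      have hzero : ∀ j, (¬ ∃ i, g i = j) → w' j = 0 := fun j hj => dif_neg hj
      have key : ∀ (f : ℝ → V → V), f 0 s₀ = 0 → (∀ j, (¬ ∃ i, g i = j) → f (w' j) (z' j) = 0) →
          ∑ j, f (w' j) (z' j) = ∑ i, f (w i) (z i) := by
        intro f hf0 hfz
        rw [← Finset.sum_subset (Finset.subset_univ ((Finset.univ.image g)))]
        · rw [Finset.sum_image (fun a _ b _ h => g.injective h)]
          exact Finset.sum_congr rfl fun i _ => by rw [hw', hz']
        · intro j _ hj
          apply hfz
          intro ⟨i, hi⟩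
          exact hj (Finset.mem_image.2 ⟨i, Finset.mem_univ i, hi⟩)
      refine ⟨(w', z'), ⟨⟨fun j => ?_, ?_⟩, fun j _ => ?_⟩, ?_⟩
      · dsimp only [w']
        split
        · exact (hpos _).le
        · exact le_rfl
      · rw [← Finset.sum_subset (Finset.subset_univ ((Finset.univ.image g)))]
        · rw [Finset.sum_image (fun a _ b _ h => g.injective h)]
          rw [← hsum]
          exact Finset.sum_congr rfl fun i _ => hw' i
        · exact fun j _ hj => hzero j (fun ⟨i, hi⟩ => hj (Finset.mem_image.2 ⟨i, Finset.mem_univ i, hi⟩))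
      · dsimp only [z']
        split
        · next h => exact hrange ⟨h.choose, rfl⟩
        · exact hs₀
      · show ∑ j, w' j • z' j = x
        rw [← hx]
        exact key (fun a v => a • v) (zero_smul ℝ s₀) (fun j hj => by simp [hzero j hj])
    · rintro x ⟨⟨w, z⟩, ⟨⟨hw0, hw1⟩, hz⟩, rfl⟩
      exact (convex_convexHull ℝ S).sum_mem (fun i _ => hw0 i) hw1
        (fun i _ => subset_convexHull ℝ S (hz i (Set.mem_univ i)))
  rw [himg]
  exact ((isCompact_stdSimplex _ _).prod (isCompact_univ_pi fun _ => hS)).image hΦ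

end Aux2
section Aux3
variable {V : Type*} [NormedAddCommGroup V] [NormedSpace ℝ V] [FiniteDimensional ℝ V]
open Module

lemma exists_strictly_pos_functional {K : Set V} (hK : IsConeSet K) (hcl : IsClosed K)
    (hpt : ∀ x ∈ K, -x ∈ K → x = 0) (hne : ∃ x ∈ K, x ≠ 0) :
    ∃ (f : V →L[ℝ] ℝ) (u : ℝ), 0 < u ∧ ∀ y ∈ K, u * ‖y‖ ≤ f y := by
  classical
  set S := K ∩ Metric.sphere (0 : V) 1 with hSdef
  obtain ⟨x₀, hx₀K, hx₀⟩ := hne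
  have hnorm : ∀ y ∈ K, y ≠ 0 → ‖y‖⁻¹ • y ∈ S := by
    intro y hy hy0
    refine ⟨hK.2.1 y hy _ (inv_nonneg.2 (norm_nonneg y)), ?_⟩
    simp [norm_smul, inv_mul_cancel₀ (norm_ne_zero_iff.2 hy0)]
  have hSne : S.Nonempty := ⟨_, hnorm x₀ hx₀K hx₀⟩
  have hScomp : IsCompact S :=
    Metric.isCompact_of_isClosed_isBounded (hcl.inter Metric.isClosed_sphere)
      (Metric.isBounded_sphere.subset Set.inter_subset_right)
  have hhull : IsCompact (convexHull ℝ S) := isCompact_convexHull_of_isCompact hScomp hSne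
  have h0 : (0 : V) ∉ convexHull ℝ S := by
    intro h0
    obtain ⟨ι, hfin, z, w, hrange, hai, hpos, hsum, hzero⟩ :=
      eq_pos_convex_span_of_mem_convexHull h0
    have hιne : Nonempty ι := by
      by_contra h
      rw [not_nonempty_iff] at h
      simp [Finset.univ_eq_empty] at hsum
    obtain ⟨i₀⟩ := hιne
    have hzK : ∀ i, z i ∈ K := fun i => (hrange ⟨i, rfl⟩).1
    have hv : w i₀ • z i₀ ∈ K := hK.2.1 _ (hzK i₀) _ (hpos i₀).le
    have hnv : -(w i₀ • z i₀) ∈ K := by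
      have : -(w i₀ • z i₀) = ∑ i ∈ Finset.univ.erase i₀, w i • z i := by
        rw [eq_comm, ← add_eq_zero_iff_eq_neg']
        rw [Finset.add_sum_erase _ (fun i => w i • z i) (Finset.mem_univ i₀)]
        exact hzero
      rw [this]
      exact sum_mem_coneSet hK _ _ fun j _ => hK.2.1 _ (hzK j) _ (hpos j).le
    have := hpt _ hv hnv
    have hz0 : z i₀ = 0 := by
      have := smul_eq_zero.1 this
      rcases this with h | h
      · exact absurd h (hpos i₀).ne'
      · exact h
    have : ‖z i₀‖ = 1 := by simpa using (hrange ⟨i₀, rfl⟩).2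
    rw [hz0] at this
    simp at this
  obtain ⟨f, u, hfu, hub⟩ :=
    geometric_hahn_banach_point_closed (convex_convexHull ℝ S) hhull.isClosed h0
  have hu : 0 < u := by simpa using hfu
  refine ⟨f, u, hu, ?_⟩
  intro y hy
  by_cases hy0 : y = 0
  · simp [hy0]
  · have h1 : u < f (‖y‖⁻¹ • y) := hub _ (subset_convexHull ℝ S (hnorm y hy hy0))
    have h2 : f y = ‖y‖ * f (‖y‖⁻¹ • y) := by
      have : f (‖y‖ • ‖y‖⁻¹ • y) = ‖y‖ * f (‖y‖⁻¹ • y) := by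
        rw [map_smul]; simp
      rw [← this, smul_smul, mul_inv_cancel₀ (norm_ne_zero_iff.2 hy0), one_smul]
    rw [h2, mul_comm]
    exact mul_le_mul_of_nonneg_left h1.le (norm_nonneg y)

end Aux3
section Aux4
variable {V : Type*} [NormedAddCommGroup V] [NormedSpace ℝ V] [FiniteDimensional ℝ V]

lemma extremePoint_isExtremeRayGen {K : Set V} (hK : IsConeSet K) {f : V →L[ℝ] ℝ} {u : ℝ}
    (hu : 0 < u) (hf : ∀ y ∈ K, u * ‖y‖ ≤ f y) {ω : V}
    (hω : ω ∈ ({y ∈ K | f y = 1} : Set V).extremePoints ℝ) : IsExtremeRayGen K ω := by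
  obtain ⟨⟨hωK, hωf⟩, hext⟩ := hω
  have hfpos : ∀ y ∈ K, y ≠ 0 → 0 < f y := by
    intro y hy hy0
    have : 0 < u * ‖y‖ := mul_pos hu (norm_pos_iff.2 hy0)
    exact lt_of_lt_of_le this (hf y hy)
  have hω0 : ω ≠ 0 := by
    intro h
    rw [h] at hωf
    simp at hωf
  refine ⟨hωK, hω0, ?_⟩
  intro x hx y hy hxy
  by_cases hx0 : x = 0
  · exact ⟨0, le_rfl, by rw [hx0, zero_smul]⟩
  by_cases hy0 : y = 0
  · refine ⟨1, zero_le_one, ?_⟩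
    rw [one_smul, ← hxy, hy0, add_zero]
  have hfx : 0 < f x := hfpos x hx hx0
  have hfy : 0 < f y := hfpos y hy hy0
  have hfsum : f x + f y = 1 := by rw [← map_add, hxy, hωf]
  set x' := (f x)⁻¹ • x with hx'
  set y' := (f y)⁻¹ • y with hy'
  have hx'B : x' ∈ {y ∈ K | f y = 1} :=
    ⟨hK.2.1 x hx _ (inv_nonneg.2 hfx.le), by
      rw [hx', map_smul, smul_eq_mul, inv_mul_cancel₀ hfx.ne']⟩
  have hy'B : y' ∈ {y ∈ K | f y = 1} :=
    ⟨hK.2.1 y hy _ (inv_nonneg.2 hfy.le), by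
      rw [hy', map_smul, smul_eq_mul, inv_mul_cancel₀ hfy.ne']⟩
  have hseg : ω ∈ openSegment ℝ x' y' := by
    refine ⟨f x, f y, hfx, hfy, hfsum, ?_⟩
    rw [hx', hy', smul_smul, smul_smul, mul_inv_cancel₀ hfx.ne', mul_inv_cancel₀ hfy.ne',
      one_smul, one_smul, hxy]
  have hx'ω := hext hx'B hy'B hseg
  refine ⟨f x, hfx.le, ?_⟩
  rw [← hx'ω, hx', smul_smul, mul_inv_cancel₀ hfx.ne', one_smul]

lemma cone_subset_closure_coneHull {K : Set V} (hK : IsConeSet K) (hcl : IsClosed K)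
    (hpt : ∀ x ∈ K, -x ∈ K → x = 0) :
    K ⊆ closure (coneHull {ω | IsExtremeRayGen K ω} : Set V) := by
  intro x hx
  by_cases hx0 : x = 0
  · exact subset_closure (by rw [hx0]; exact (coneHull _).zero_mem)
  obtain ⟨f, u, hu, hf⟩ := exists_strictly_pos_functional hK hcl hpt ⟨x, hx, hx0⟩
  set B := {y ∈ K | f y = 1} with hB
  have hBconv : Convex ℝ B := by
    intro a ha b hb s t hs ht hst
    exact ⟨hK.convex ha.1 hb.1 hs ht hst, by
      rw [map_add, map_smul, map_smul, ha.2, hb.2, smul_eq_mul, smul_eq_mul,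
        mul_one, mul_one, hst]⟩
  have hBclosed : IsClosed B := by
    have : B = K ∩ f ⁻¹' {1} := rfl
    rw [this]
    exact hcl.inter (IsClosed.preimage f.continuous isClosed_singleton)
  have hBbdd : Bornology.IsBounded B := by
    apply (Metric.isBounded_closedBall (x := (0:V)) (r := u⁻¹)).subset
    intro y hy
    rw [Metric.mem_closedBall, dist_zero_right]
    have h1 : u * ‖y‖ ≤ 1 := by rw [← hy.2]; exact hf y hy.1
    rw [← one_div]
    rw [le_div_iff₀ hu, mul_comm]
    exact h1
  have hBcomp : IsCompact B := Metric.isCompact_of_isClosed_isBounded hBclosed hBbdd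
  have hKM := closure_convexHull_extremePoints hBcomp hBconv
  have hfx : 0 < f x := lt_of_lt_of_le (mul_pos hu (norm_pos_iff.2 hx0)) (hf x hx)
  have hx'B : (f x)⁻¹ • x ∈ B :=
    ⟨hK.2.1 x hx _ (inv_nonneg.2 hfx.le), by
      rw [map_smul, smul_eq_mul, inv_mul_cancel₀ hfx.ne']⟩
  rw [← hKM] at hx'B
  have hsub : convexHull ℝ (B.extremePoints ℝ) ⊆
      (coneHull {ω | IsExtremeRayGen K ω} : Set V) := by
    apply convexHull_min _ (isConeSet_coneHull _).convex
    intro ω hω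
    exact AddSubmonoid.subset_closure
      ⟨1, zero_le_one, ω, extremePoint_isExtremeRayGen hK hu hf hω, (one_smul ℝ ω).symm⟩
  obtain ⟨p, hp, hplim⟩ := mem_closure_iff_seq_limit.1 hx'B
  refine mem_closure_iff_seq_limit.2 ⟨fun k => f x • p k,
    fun k => smul_mem_coneHull (hsub (hp k)) hfx.le, ?_⟩
  have := hplim.const_smul (f x)
  rwa [smul_smul, mul_inv_cancel₀ hfx.ne', one_smul] at this

end Aux4
section Aux5
variable {V : Type*} [NormedAddCommGroup V] [NormedSpace ℝ V] [FiniteDimensional ℝ V]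

lemma exists_isCompl_of_disjoint (U W : Submodule ℝ V) (h : Disjoint U W) :
    ∃ W' : Submodule ℝ V, W ≤ W' ∧ IsCompl U W' := by
  obtain ⟨Q, hQ⟩ := Submodule.exists_isCompl (U ⊔ W)
  refine ⟨W ⊔ Q, le_sup_left, ?_, ?_⟩
  · rw [Submodule.disjoint_def]
    intro x hxU hxWQ
    obtain ⟨w, hw, q, hq, rfl⟩ := Submodule.mem_sup.1 hxWQ
    have hqUW : q ∈ U ⊔ W := by
      have : q = (w + q) - w := by abel
      rw [this]
      exact sub_mem (Submodule.mem_sup_left hxU) (Submodule.mem_sup_right hw)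
    have hq0 : q = 0 := Submodule.disjoint_def.1 hQ.disjoint q hqUW hq
    rw [hq0, add_zero] at hxU ⊢
    exact Submodule.disjoint_def.1 h w hxU hw
  · rw [codisjoint_iff, ← sup_assoc]
    exact codisjoint_iff.1 hQ.codisjoint

end Aux5

/-- If a closed pointed cone `C` is the direct sum of irreducible cones `Cs i`
spanning independent subspaces `Vᵢ`, and the positive linear map `T` scales every extreme
ray generator of `C`, then `T` acts on each summand `Vᵢ` as a nonnegative scalar `cᵢ`
(i.e. `T = ∑ᵢ cᵢ Pᵢ` for the projections `Pᵢ` onto the `Vᵢ`). -/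
theorem nondisturbing_maps_are_sums_of_scaled_projections
    {V : Type*} [NormedAddCommGroup V] [NormedSpace ℝ V] [FiniteDimensional ℝ V]
    {n : ℕ} (C : Set V) (Cs : Fin n → Set V)
    (hC : IsConeSet C) (hclosed : IsClosed C)
    (hpointed : ∀ x ∈ C, -x ∈ C → x = 0)
    (hCs : ∀ i, IsConeSet (Cs i))
    (hsub : ∀ i, Cs i ⊆ C)
    (hindep : iSupIndep fun i => Submodule.span ℝ (Cs i))
    (hspan : (⨆ i, Submodule.span ℝ (Cs i)) = ⊤)
    (hdecomp : ∀ x ∈ C, ∃ y : Fin n → V, (∀ i, y i ∈ Cs i) ∧ x = ∑ i, y i)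
    (hirr : ∀ i, IsIrreducibleCone (Cs i))
    (T : V →ₗ[ℝ] V) (hTpos : ∀ x ∈ C, T x ∈ C)
    (hT : ∀ ω, IsExtremeRayGen C ω → ∃ c : ℝ, 0 ≤ c ∧ T ω = c • ω) :
    ∃ c : Fin n → ℝ, (∀ i, 0 ≤ c i) ∧
      ∀ i, ∀ x ∈ Submodule.span ℝ (Cs i), T x = c i • x := by
  classical
  -- uniqueness of components in the direct sum
  have huniq : ∀ (i : Fin n) (z : Fin n → V), (∀ j, z j ∈ Submodule.span ℝ (Cs j)) →
      (∑ j, z j) ∈ Submodule.span ℝ (Cs i) → ∀ j, j ≠ i → z j = 0 := by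
    intro i z hz hsum j hj
    have h1 : z j ∈ ⨆ k, ⨆ _ : k ≠ j, Submodule.span ℝ (Cs k) := by
      have heq : z j = (∑ k, z k) - ∑ k ∈ Finset.univ.erase j, z k := by
        rw [← Finset.add_sum_erase _ z (Finset.mem_univ j)]; abel
      rw [heq]
      refine sub_mem ?_ (Submodule.sum_mem _ fun k hk => ?_)
      · exact (le_iSup₂ (f := fun k (_ : k ≠ j) => Submodule.span ℝ (Cs k)) i (Ne.symm hj)) hsum
      · exact (le_iSup₂ (f := fun k (_ : k ≠ j) => Submodule.span ℝ (Cs k)) k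
          (Finset.mem_erase.1 hk).1) (hz k)
    exact Submodule.disjoint_def.1 (hindep j) _ (hz j) h1
  -- each summand is the trace of `C` on its span
  have hCs_eq : ∀ i, Cs i = C ∩ (Submodule.span ℝ (Cs i) : Set V) := by
    intro i
    apply Set.Subset.antisymm
    · exact fun x hx => ⟨hsub i hx, Submodule.subset_span hx⟩
    · rintro x ⟨hxC, hxS⟩
      obtain ⟨y, hy, hxe⟩ := hdecomp x hxC
      have hj0 := huniq i y (fun j => Submodule.subset_span (hy j)) (by rw [← hxe]; exact hxS)
      have hxyi : x = y i := by
        rw [hxe, ← Finset.add_sum_erase _ y (Finset.mem_univ i),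
          Finset.sum_eq_zero (fun j hj => hj0 j (Finset.mem_erase.1 hj).1), add_zero]
      rw [hxyi]; exact hy i
  have hCsClosed : ∀ i, IsClosed (Cs i) := fun i => by
    rw [hCs_eq i]; exact hclosed.inter (Submodule.closed_of_finiteDimensional _)
  have hCsPt : ∀ i, ∀ x ∈ Cs i, -x ∈ Cs i → x = 0 :=
    fun i x hx hnx => hpointed x (hsub i hx) (hsub i hnx)
  -- extreme ray generators of summands are extreme ray generators of `C`
  have hgen : ∀ i ω, IsExtremeRayGen (Cs i) ω → IsExtremeRayGen C ω := by
    intro i ω hω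
    obtain ⟨hωC, hω0, hωext⟩ := hω
    refine ⟨hsub i hωC, hω0, ?_⟩
    intro x hx y hy hxy
    obtain ⟨xs, hxs, hxe⟩ := hdecomp x hx
    obtain ⟨ys, hys, hye⟩ := hdecomp y hy
    have hz : ∀ j, xs j + ys j ∈ Submodule.span ℝ (Cs j) :=
      fun j => add_mem (Submodule.subset_span (hxs j)) (Submodule.subset_span (hys j))
    have hsum : (∑ j, (xs j + ys j)) ∈ Submodule.span ℝ (Cs i) := by
      rw [Finset.sum_add_distrib, ← hxe, ← hye, hxy]
      exact Submodule.subset_span hωC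
    have hj0 := huniq i (fun j => xs j + ys j) hz hsum
    have hxj : ∀ j, j ≠ i → xs j = 0 := by
      intro j hj
      apply hpointed _ (hsub j (hxs j))
      rw [show -xs j = ys j from (eq_neg_of_add_eq_zero_right (hj0 j hj)).symm]
      exact hsub j (hys j)
    have hyj : ∀ j, j ≠ i → ys j = 0 := by
      intro j hj
      have h : xs j + ys j = 0 := hj0 j hj
      rw [hxj j hj, zero_add] at h; exact h
    have hxCs : x ∈ Cs i := by
      have hxx : x = xs i := by
        rw [hxe, ← Finset.add_sum_erase _ xs (Finset.mem_univ i),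
          Finset.sum_eq_zero (fun j hj => hxj j (Finset.mem_erase.1 hj).1), add_zero]
      rw [hxx]; exact hxs i
    have hyCs : y ∈ Cs i := by
      have hyy : y = ys i := by
        rw [hye, ← Finset.add_sum_erase _ ys (Finset.mem_univ i),
          Finset.sum_eq_zero (fun j hj => hyj j (Finset.mem_erase.1 hj).1), add_zero]
      rw [hyy]; exact hys i
    exact hωext x hxCs y hyCs hxy
  -- the scalar for each summand
  have H : ∀ i, ∃ ci : ℝ, 0 ≤ ci ∧ ∀ x ∈ Submodule.span ℝ (Cs i), T x = ci • x := by
    intro i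
    set G := {ω | IsExtremeRayGen (Cs i) ω} with hG
    have hKsub : Cs i ⊆ closure (coneHull G : Set V) :=
      cone_subset_closure_coneHull (hCs i) (hCsClosed i) (hCsPt i)
    by_cases hGne : ∃ ω, ω ∈ G
    · obtain ⟨ω₀, hω₀⟩ := hGne
      obtain ⟨c, hc0, hc⟩ := hT ω₀ (hgen i ω₀ hω₀)
      have hall : ∀ ω ∈ G, T ω = c • ω := by
        by_contra hcon
        push_neg at hcon
        obtain ⟨ω₁, hω₁G, hω₁⟩ := hcon
        set U := Module.End.eigenspace T c with hU
        set W := ⨆ μ, ⨆ _ : μ ≠ c, Module.End.eigenspace T μ with hW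
        set Gc := {ω ∈ G | T ω = c • ω} with hGc
        set Gn := {ω ∈ G | T ω ≠ c • ω} with hGn
        have hGcU : Gc ⊆ (U : Set V) := fun ω hω => Module.End.mem_eigenspace_iff.2 hω.2
        have hGnW : Gn ⊆ (W : Set V) := by
          intro ω hω
          obtain ⟨μ, hμ0, hμ⟩ := hT ω (hgen i ω hω.1)
          have hμc : μ ≠ c := fun h => hω.2 (h ▸ hμ)
          exact (le_iSup₂ (f := fun μ (_ : μ ≠ c) => Module.End.eigenspace T μ) μ hμc)
            (Module.End.mem_eigenspace_iff.2 hμ)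
        have hdisj : Disjoint U W := Module.End.eigenspaces_iSupIndep T c
        set D := closure (coneHull Gc : Set V) with hD
        set E := closure (coneHull Gn : Set V) with hE
        have hDU : D ⊆ (U : Set V) :=
          closure_minimal (coneHull_subset_submodule hGcU) U.closed_of_finiteDimensional
        have hEW : E ⊆ (W : Set V) :=
          closure_minimal (coneHull_subset_submodule hGnW) W.closed_of_finiteDimensional
        have hDK : D ⊆ Cs i :=
          closure_minimal (coneHull_subset (hCs i) (fun ω hω => hω.1.1)) (hCsClosed i)
        have hEK : E ⊆ Cs i :=
          closure_minimal (coneHull_subset (hCs i) (fun ω hω => hω.1.1)) (hCsClosed i)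
        apply (hirr i).2
        refine ⟨D, E, (isConeSet_coneHull Gc).closure, (isConeSet_coneHull Gn).closure,
          ?_, ?_, ?_, ?_⟩
        · intro hD0
          apply (hω₀ : IsExtremeRayGen (Cs i) ω₀).2.1
          have hmem : ω₀ ∈ D := subset_closure
            (AddSubmonoid.subset_closure ⟨1, zero_le_one, ω₀, ⟨hω₀, hc⟩, (one_smul ℝ ω₀).symm⟩)
          rw [hD0] at hmem; exact hmem
        · intro hE0
          apply (hω₁G : IsExtremeRayGen (Cs i) ω₁).2.1
          have hmem : ω₁ ∈ E := subset_closure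
            (AddSubmonoid.subset_closure ⟨1, zero_le_one, ω₁, ⟨hω₁G, hω₁⟩, (one_smul ℝ ω₁).symm⟩)
          rw [hE0] at hmem; exact hmem
        · have h1 : Submodule.span ℝ D ≤ U := Submodule.span_le.2 hDU
          have h2 : Submodule.span ℝ E ≤ W := Submodule.span_le.2 hEW
          exact le_bot_iff.1 ((inf_le_inf h1 h2).trans (disjoint_iff_inf_le.1 hdisj))
        · apply Set.Subset.antisymm
          · intro x hx
            have hx' := hKsub hx
            have hsets : {y | ∃ t : ℝ, 0 ≤ t ∧ ∃ ω ∈ G, y = t • ω} =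
                {y | ∃ t : ℝ, 0 ≤ t ∧ ∃ ω ∈ Gc, y = t • ω} ∪
                {y | ∃ t : ℝ, 0 ≤ t ∧ ∃ ω ∈ Gn, y = t • ω} := by
              ext y
              constructor
              · rintro ⟨t, ht, ω, hω, rfl⟩
                by_cases h : T ω = c • ω
                · exact Or.inl ⟨t, ht, ω, ⟨hω, h⟩, rfl⟩
                · exact Or.inr ⟨t, ht, ω, ⟨hω, h⟩, rfl⟩
              · rintro (⟨t, ht, ω, hω, rfl⟩ | ⟨t, ht, ω, hω, rfl⟩)
                · exact ⟨t, ht, ω, hω.1, rfl⟩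
                · exact ⟨t, ht, ω, hω.1, rfl⟩
            have hGsplit : coneHull G = coneHull Gc ⊔ coneHull Gn := by
              rw [coneHull, hsets, AddSubmonoid.closure_union]; rfl
            obtain ⟨W', hWW', hcompl⟩ := exists_isCompl_of_disjoint U W hdisj
            set π : V →ₗ[ℝ] V := U.subtype.comp (U.linearProjOfIsCompl W' hcompl) with hπ
            have hπcont : Continuous π := π.continuous_of_finiteDimensional
            obtain ⟨zseq, hzmem, hzlim⟩ := mem_closure_iff_seq_limit.1 hx'
            have hsplit : ∀ k, ∃ d e, d ∈ coneHull Gc ∧ e ∈ coneHull Gn ∧ zseq k = d + e := by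
              intro k
              have hm := hzmem k
              rw [SetLike.mem_coe, hGsplit] at hm
              obtain ⟨d, hd, e, he, hkeq⟩ := AddSubmonoid.mem_sup.1 hm
              exact ⟨d, e, hd, he, hkeq.symm⟩
            choose ds es hds hes hkeq using hsplit
            have hdsU : ∀ k, ds k ∈ U := fun k => coneHull_subset_submodule hGcU (hds k)
            have hesW' : ∀ k, es k ∈ W' := fun k => hWW' (coneHull_subset_submodule hGnW (hes k))
            have hπz : ∀ k, π (zseq k) = ds k := by
              intro k
              rw [hkeq k, map_add]
              have h1 : π (ds k) = ds k := by
                simp only [hπ, LinearMap.comp_apply]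
                erw [show ds k = ((⟨ds k, hdsU k⟩ : U) : V) from rfl,
                  Submodule.linearProjOfIsCompl_apply_left hcompl]
                rfl
              have h2 : π (es k) = 0 := by
                simp only [hπ, LinearMap.comp_apply]
                erw [show es k = ((⟨es k, hesW' k⟩ : W') : V) from rfl,
                  Submodule.linearProjOfIsCompl_apply_right hcompl]
                rfl
              rw [h1, h2, add_zero]
            have hdlim : Filter.Tendsto ds Filter.atTop (nhds (π x)) := by
              have hcomp := (hπcont.tendsto x).comp hzlim
              refine hcomp.congr fun k => ?_
              exact hπz k
            have hdD : π x ∈ D := mem_closure_iff_seq_limit.2 ⟨ds, hds, hdlim⟩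
            have helim : Filter.Tendsto es Filter.atTop (nhds (x - π x)) := by
              refine (hzlim.sub hdlim).congr fun k => ?_
              rw [hkeq k]; abel
            have heE : x - π x ∈ E := mem_closure_iff_seq_limit.2 ⟨es, hes, helim⟩
            exact ⟨π x, hdD, x - π x, heE, by abel⟩
          · rintro x ⟨d, hd, e, he, rfl⟩
            exact (hCs i).2.2 d (hDK hd) e (hEK he)
      have hKU : Cs i ⊆ (Module.End.eigenspace T c : Set V) := by
        refine hKsub.trans (closure_minimal (coneHull_subset_submodule ?_)
          (Module.End.eigenspace T c).closed_of_finiteDimensional)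
        intro ω hω
        exact Module.End.mem_eigenspace_iff.2 (hall ω hω)
      refine ⟨c, hc0, fun x hx => ?_⟩
      have hle : Submodule.span ℝ (Cs i) ≤ Module.End.eigenspace T c := Submodule.span_le.2 hKU
      exact Module.End.mem_eigenspace_iff.1 (hle hx)
    · refine ⟨0, le_rfl, fun x hx => ?_⟩
      have hGempty : G = ∅ := Set.eq_empty_iff_forall_notMem.2 fun ω hω => hGne ⟨ω, hω⟩
      have hzero : Cs i ⊆ {(0 : V)} := by
        refine hKsub.trans ?_
        have hgens : {y | ∃ t : ℝ, 0 ≤ t ∧ ∃ ω ∈ G, y = t • ω} = (∅ : Set V) := by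
          rw [hGempty]; simp
        have hch : (coneHull G : Set V) = {0} := by
          rw [coneHull, hgens, AddSubmonoid.closure_empty]; rfl
        rw [hch, closure_singleton]
      have hsple : Submodule.span ℝ (Cs i) ≤ ⊥ := by
        rw [← Submodule.span_zero_singleton (R := ℝ) (M := V)]
        exact Submodule.span_mono hzero
      have hx0 : x = 0 := by simpa using hsple hx
      simp [hx0]
  choose cf h1 h2 using H
  exact ⟨cf, h1, h2⟩
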